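/- Let W be the k-vector space with basis {e_{(a,b)}} indexed by pairs of functions a, b : {1,…,m} → {0,1,…,ℓ−1}, and define k-linear maps ρ_i on W by ρ_i(e_{(a,b)}) = q^{b_i} · e_{(a+ε_i, b+η_i)} if a_i ≤ ℓ−2 and ρ_i(e_{(a,b)}) = 0 if a_i = ℓ−1, where ε_i is the i-th standard unit vector, η_i = ε_1 + ⋯ + ε_{i−1} (so η_1 = 0), and the addition b+η_i is taken modulo ℓ. (ρ_i is right multiplication by X_i h_i on the algebra A = Λ ⋊ G, so for λ ∈ k^m the operator ρ_λ = λ_1ρ_1 + ⋯ + λ_mρ_m is right multiplication by τ_λ(t), and the images of ρ_λ^{ℓ−1} and ρ_λ are the left ideals V(λ) = A·τ_λ(t)^{ℓ−1} and V′(λ) = A·τ_λ(t) of the paper.) Then for every nonzero λ ∈ k^m: dim_k(image of ρ_λ^{ℓ−1}) = ℓ^{2m−1} and dim_k(image of ρ_λ) = (ℓ−1)·ℓ^{2m−1}. (This is Lemma 2.4(iii): dim V(λ) = ℓ^{2m−1} and dim V′(λ) = (ℓ−1)ℓ^{2m−1}.) -/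

import Mathlib

/-- The index set for the standard basis of the regular representation `W` of
`A = Λ ⋊ G`: pairs of functions `a, b : {1,…,m} → {0,…,ℓ−1}`. -/
abbrev QEAIdx (m ℓ : ℕ) := (Fin m → Fin ℓ) × (Fin m → Fin ℓ)

/-- The `k`-vector space `W` with basis `e_{(a,b)}` indexed by `QEAIdx m ℓ`,
realized as the space of `k`-valued functions on the (finite) index set. -/
abbrev QEASpace (k : Type*) [Field k] (m ℓ : ℕ) := QEAIdx m ℓ → k

/-- The operator `ρ_i` on `W` (right multiplication by `X_i h_i` on `A = Λ ⋊ G`):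
`ρ_i (e_{(a,b)}) = q^{b_i} · e_{(a+ε_i, b+η_i)}` if `a_i ≤ ℓ−2` and `ρ_i (e_{(a,b)}) = 0` if
`a_i = ℓ−1`, where `η_i = ε_1 + ⋯ + ε_{i−1}` (so `η_1 = 0`) and `b + η_i` is taken mod `ℓ`.
(In coordinates, `(ρ_i f)(a,b) = q^{b_i} · f(a−ε_i, b−η_i)` when `a_i ≥ 1`, else `0`;
here `(b−η_i)_i = b_i` since `(η_i)_i = 0`.) -/
def qeaRho (k : Type*) [Field k] (q : k) (m ℓ : ℕ) [NeZero ℓ] (i : Fin m) :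
    Module.End k (QEASpace k m ℓ) where
  toFun f := fun p =>
    if 1 ≤ (p.1 i).val then
      q ^ (p.2 i).val *
        f (Function.update p.1 i (p.1 i - 1), fun j => if j < i then p.2 j - 1 else p.2 j)
    else 0
  map_add' f g := by
    funext p; by_cases h : 1 ≤ (p.1 i).val <;> simp [h, mul_add]
  map_smul' c f := by
    funext p; by_cases h : 1 ≤ (p.1 i).val <;> simp [h] <;> ring

section QBin
variable {k : Type*} [Field k]

/-- Gaussian binomial coefficients via the recursion matching the `(u+v)^n` expansion. -/
def qbc (q : k) : ℕ → ℕ → k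
  | 0, 0 => 1
  | 0, _ + 1 => 0
  | n + 1, 0 => qbc q n 0
  | n + 1, j + 1 => qbc q n (j + 1) + q ^ (n - j) * qbc q n j

variable (q : k)

@[simp] lemma qbc_zero_succ (j : ℕ) : qbc q 0 (j+1) = 0 := rfl
lemma qbc_succ_succ (n j : ℕ) : qbc q (n+1) (j+1) = qbc q n (j+1) + q ^ (n - j) * qbc q n j := rfl

@[simp] lemma qbc_n_zero (n : ℕ) : qbc q n 0 = 1 := by
  induction n with
  | zero => rfl
  | succ n ih => rw [show qbc q (n+1) 0 = qbc q n 0 from rfl, ih]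

lemma qbc_of_lt : ∀ {n j : ℕ}, n < j → qbc q n j = 0
  | 0, j + 1, _ => rfl
  | n + 1, j + 1, h => by
    rw [qbc_succ_succ, qbc_of_lt (by omega), qbc_of_lt (by omega), mul_zero, add_zero]

lemma qbc_one (n : ℕ) : qbc q n 1 = ∑ i ∈ Finset.range n, q ^ i := by
  induction n with
  | zero => simp
  | succ n ih => rw [qbc_succ_succ, ih, Finset.sum_range_succ, qbc_n_zero, Nat.sub_zero,
      mul_one, add_comm]

/-- The second Pascal recursion. -/
lemma qbc_succ_succ' (n j : ℕ) :
    qbc q (n+1) (j+1) = q ^ (j+1) * qbc q n (j+1) + qbc q n j := by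
  induction n generalizing j with
  | zero =>
    match j with
    | 0 => simp [qbc_succ_succ]
    | j + 1 =>
      rw [qbc_of_lt q (show 1 < j+2 by omega), qbc_zero_succ, qbc_zero_succ, mul_zero, add_zero]
  | succ n ih =>
    match j with
    | 0 =>
      rw [qbc_one, qbc_one, qbc_n_zero, geom_sum_succ, pow_one]
    | j + 1 =>
      rcases Nat.lt_or_ge (n + 1) (j + 1) with h | h
      · rw [qbc_of_lt q (by omega), qbc_of_lt q (by omega), qbc_of_lt q (by omega),
          mul_zero, add_zero]
      rcases Nat.eq_or_lt_of_le h with h' | h'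
      · -- j = n : diagonal case
        obtain rfl : j = n := by omega
        have hd : ∀ N, qbc q (N+1) (N+1) = qbc q N N := fun N => by
          rw [qbc_succ_succ, qbc_of_lt q (by omega), Nat.sub_self, pow_zero, one_mul, zero_add]
        rw [qbc_of_lt q (by omega : j+1 < j+1+1), mul_zero, zero_add, hd (j+1)]
      · have hj : j + 1 ≤ n := by omega
        have L : qbc q (n+1+1) (j+1+1) =
            (q^(j+1+1) * qbc q n (j+1+1) + qbc q n (j+1))
              + q^(n-j) * (q^(j+1) * qbc q n (j+1) + qbc q n j) := by
          rw [qbc_succ_succ q (n+1) (j+1), show n+1-(j+1) = n-j by omega, ih (j+1), ih j]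
        have R1 : qbc q (n+1) (j+1+1) = qbc q n (j+1+1) + q^(n-(j+1)) * qbc q n (j+1) :=
          qbc_succ_succ q n (j+1)
        have R2 : qbc q (n+1) (j+1) = qbc q n (j+1) + q^(n-j) * qbc q n j :=
          qbc_succ_succ q n j
        have e1 : q^(n-j) * q^(j+1) = q^(n+1) := by rw [← pow_add]; congr 1; omega
        have e2 : q^(j+1+1) * q^(n-(j+1)) = q^(n+1) := by rw [← pow_add]; congr 1; omega
        rw [L, R1, R2]
        linear_combination qbc q n (j+1) * e1 - qbc q n (j+1) * e2

/-- Vanishing of Gaussian binomials at a primitive root of unity. -/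
lemma qbc_eq_zero {ℓ : ℕ} (hq : q ^ ℓ = 1) (hq' : ∀ s : ℕ, 0 < s → s < ℓ → q ^ s ≠ 1)
    {j : ℕ} (hj0 : 0 < j) (hjl : j < ℓ) : qbc q ℓ j = 0 := by
  induction j with
  | zero => omega
  | succ j ihj =>
    -- relation: (q^(j+1) - 1) * qbc ℓ (j+1) = (q^(ℓ - j) - 1) * qbc ℓ j
    have key : q ^ (j+1) * qbc q ℓ (j+1) + qbc q ℓ j
        = qbc q ℓ (j+1) + q ^ (ℓ - j) * qbc q ℓ j := by
      rw [← qbc_succ_succ' q ℓ j, qbc_succ_succ q ℓ j]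
    have hne : q ^ (j+1) - 1 ≠ 0 := sub_ne_zero.mpr (hq' (j+1) (by omega) hjl)
    rcases Nat.eq_zero_or_pos j with rfl | hj
    · -- j = 0 : use q^ℓ = 1
      have : (q ^ 1 - 1) * qbc q ℓ 1 = (q ^ ℓ - 1) * qbc q ℓ 0 := by
        rw [show ℓ - 0 = ℓ from rfl] at key; linear_combination key
      rw [hq, sub_self, zero_mul] at this
      exact (mul_eq_zero.mp this).resolve_left hne
    · have h0 : qbc q ℓ j = 0 := ihj hj (by omega)
      have : (q ^ (j+1) - 1) * qbc q ℓ (j+1) = 0 := by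
        rw [h0] at key; linear_combination key
      exact (mul_eq_zero.mp this).resolve_left hne
end QBin

section QBinAlg
variable {k : Type*} [Field k] {R : Type*} [Ring R] [Algebra k R] (q : k)

lemma qcomm_pow {u v : R} (h : u * v = q • (v * u)) (p : ℕ) :
    u * v ^ p = q ^ p • (v ^ p * u) := by
  induction p with
  | zero => simp
  | succ p ih =>
    calc u * v^(p+1) = (u * v) * v^p := by rw [pow_succ', ← mul_assoc]
      _ = q • ((v*u) * v^p) := by rw [h, smul_mul_assoc]
      _ = q • (v * (u * v^p)) := by rw [mul_assoc]
      _ = q • (v * (q^p • (v^p * u))) := by rw [ih]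
      _ = (q*q^p) • (v * (v^p*u)) := by rw [mul_smul_comm, smul_smul]
      _ = q^(p+1) • (v^(p+1) * u) := by rw [pow_succ' q p, pow_succ' v p, mul_assoc]

/-- Quantum binomial expansion. -/
lemma qbinomial {u v : R} (h : u * v = q • (v * u)) (n : ℕ) :
    (u + v) ^ n = ∑ j ∈ Finset.range (n+1), qbc q n j • (v ^ (n-j) * u ^ j) := by
  induction n with
  | zero => simp
  | succ n ih =>
    rw [pow_succ', ih, Finset.mul_sum]
    have hterm : ∀ j ∈ Finset.range (n+1),
        (u + v) * (qbc q n j • (v ^ (n-j) * u ^ j))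
          = (q ^ (n-j) * qbc q n j) • (v ^ (n-j) * u ^ (j+1))
            + qbc q n j • (v ^ (n-j+1) * u ^ j) := by
      intro j hj
      rw [add_mul, mul_smul_comm, mul_smul_comm, ← mul_assoc, qcomm_pow q h,
        smul_mul_assoc, smul_smul, mul_assoc, ← pow_succ']
      rw [← mul_assoc, ← pow_succ']
      ring_nf
    rw [Finset.sum_congr rfl hterm, Finset.sum_add_distrib]
    -- RHS : split off the j = 0 term
    rw [Finset.sum_range_succ' (fun j => qbc q (n+1) j • (v ^ (n+1-j) * u ^ j)) (n+1)]
    have e0 : qbc q (n+1) 0 • (v ^ (n+1-0) * u ^ 0) = qbc q n 0 • (v ^ (n+1) * u ^ 0) := by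
      rw [qbc_n_zero, qbc_n_zero, Nat.sub_zero]
    rw [e0]
    have esplit : ∀ j ∈ Finset.range (n+1),
        qbc q (n+1) (j+1) • (v ^ (n+1-(j+1)) * u ^ (j+1))
          = (q ^ (n-j) * qbc q n j) • (v ^ (n-j) * u ^ (j+1))
            + qbc q n (j+1) • (v ^ (n-j) * u ^ (j+1)) := by
      intro j hj
      rw [qbc_succ_succ, show n+1-(j+1) = n-j by omega, add_smul, add_comm]
    rw [Finset.sum_congr rfl esplit, Finset.sum_add_distrib]
    have last : ∑ j ∈ Finset.range (n+1), qbc q n j • (v ^ (n-j+1) * u ^ j)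
        = (∑ j ∈ Finset.range (n+1), qbc q n (j+1) • (v ^ (n-j) * u ^ (j+1)))
          + qbc q n 0 • (v ^ (n+1) * u ^ 0) := by
      rw [Finset.sum_range_succ (fun j => qbc q n (j+1) • (v ^ (n-j) * u ^ (j+1))) n]
      rw [Finset.sum_range_succ' (fun j => qbc q n j • (v ^ (n-j+1) * u ^ j)) n]
      rw [qbc_of_lt q (by omega : n < n+1), zero_smul, add_zero, Nat.sub_zero]
      congr 1
      refine Finset.sum_congr rfl fun j hj => ?_
      have : n - (j+1) + 1 = n - j := by simp at hj; omega
      rw [this]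
    rw [last]
    abel

/-- `(u+v)^ℓ = 0` for `q`-commuting nilpotents at a primitive root of unity. -/
lemma qbinomial_nilpotent {ℓ : ℕ} (hl : 2 ≤ ℓ) (hq : q ^ ℓ = 1)
    (hq' : ∀ s : ℕ, 0 < s → s < ℓ → q ^ s ≠ 1)
    {u v : R} (h : u * v = q • (v * u)) (hu : u ^ ℓ = 0) (hv : v ^ ℓ = 0) :
    (u + v) ^ ℓ = 0 := by
  rw [qbinomial q h]
  refine Finset.sum_eq_zero fun j hj => ?_
  simp only [Finset.mem_range] at hj
  rcases Nat.eq_zero_or_pos j with rfl | hj0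
  · rw [Nat.sub_zero, pow_zero, mul_one, hv, smul_zero]
  rcases Nat.eq_or_lt_of_le (Nat.lt_succ_iff.mp hj) with rfl | hjl
  · rw [hu, mul_zero, smul_zero]
  · rw [qbc_eq_zero q hq hq' hj0 hjl, zero_smul]

/-- Sum version over a finite linearly ordered index. -/
lemma qbinomial_sum_nilpotent {ι : Type*} [LinearOrder ι] {ℓ : ℕ} (hl : 2 ≤ ℓ)
    (hq : q ^ ℓ = 1) (hq' : ∀ s : ℕ, 0 < s → s < ℓ → q ^ s ≠ 1) (x : ι → R)
    (s : Finset ι) (hnil : ∀ i ∈ s, x i ^ ℓ = 0)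
    (hcomm : ∀ i ∈ s, ∀ j ∈ s, i < j → x i * x j = q • (x j * x i)) :
    (∑ i ∈ s, x i) ^ ℓ = 0 := by
  induction s using Finset.induction_on_min with
  | empty => rw [Finset.sum_empty, zero_pow (by omega)]
  | insert a s ha ih =>
    rw [Finset.sum_insert (fun hc => lt_irrefl a (ha a hc))]
    refine qbinomial_nilpotent q hl hq hq' ?_ (hnil a (Finset.mem_insert_self a s)) ?_
    · rw [Finset.mul_sum, Finset.sum_mul, Finset.smul_sum]
      exact Finset.sum_congr rfl fun i hi =>
        hcomm a (Finset.mem_insert_self a s) i (Finset.mem_insert_of_mem hi) (ha i hi)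
    · exact ih (fun i hi => hnil i (Finset.mem_insert_of_mem hi))
        (fun i hi j hj hij => hcomm i (Finset.mem_insert_of_mem hi) j
          (Finset.mem_insert_of_mem hj) hij)
end QBinAlg

section Ops
open Fin.NatCast
variable {k : Type*} [Field k] {ℓ : ℕ} (hℓ : 2 ≤ ℓ) [NeZero ℓ] {q : k}
  {m : ℕ}

lemma qeaRho_apply (i : Fin m) (f : QEASpace k m ℓ) (p : QEAIdx m ℓ) :
    qeaRho k q m ℓ i f p =
      if 1 ≤ (p.1 i).val then
        q ^ (p.2 i).val *
          f (Function.update p.1 i (p.1 i - 1), fun j => if j < i then p.2 j - 1 else p.2 j)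
      else 0 := rfl

lemma fin_sub_one_val (x : Fin ℓ) (h : 1 ≤ x.val) : (x - 1).val = x.val - 1 := by
  have hx := x.isLt
  have h1 : ((1 : Fin ℓ) : ℕ) = 1 := by
    rw [Fin.val_one']; exact Nat.mod_eq_of_lt (by omega)
  rw [Fin.sub_def]
  show (ℓ - ((1 : Fin ℓ) : ℕ) + x.val) % ℓ = x.val - 1
  rw [h1, show ℓ - 1 + x.val = (x.val - 1) + ℓ by omega, Nat.add_mod_right,
    Nat.mod_eq_of_lt (by omega)]

include hℓ

lemma fin_zero_sub_one_val (x : Fin ℓ) (h : x.val = 0) : (x - 1).val = ℓ - 1 := by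
  have h1 : ((1 : Fin ℓ) : ℕ) = 1 := by
    rw [Fin.val_one']; exact Nat.mod_eq_of_lt (by omega)
  rw [Fin.sub_def]
  show (ℓ - ((1 : Fin ℓ) : ℕ) + x.val) % ℓ = ℓ - 1
  rw [h1, h, Nat.add_zero]
  exact Nat.mod_eq_of_lt (by omega)

lemma q_pow_fin_sub_one (hq : q ^ ℓ = 1) (x : Fin ℓ) :
    q ^ ((x - 1).val) * q = q ^ x.val := by
  rcases Nat.eq_zero_or_pos x.val with h | h
  · rw [fin_zero_sub_one_val hℓ x h, ← pow_succ, Nat.sub_add_cancel (by omega), hq, h, pow_zero]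
  · rw [fin_sub_one_val x h, ← pow_succ, Nat.sub_add_cancel (by omega)]

omit hℓ

lemma qeaRho_pow_eval_zero (i : Fin m) (s : ℕ) (f : QEASpace k m ℓ) (p : QEAIdx m ℓ)
    (h : (p.1 i).val < s) : ((qeaRho k q m ℓ i) ^ s) f p = 0 := by
  induction s generalizing f p with
  | zero => omega
  | succ s ih =>
    rw [pow_succ']
    rw [Module.End.mul_apply, qeaRho_apply]
    split_ifs with hc
    · rw [ih]
      · rw [mul_zero]
      · simp only [Function.update_self]
        have := fin_sub_one_val (p.1 i) hc
        omega
    · rfl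

lemma qeaRho_pow_l (i : Fin m) : (qeaRho k q m ℓ i) ^ ℓ = 0 := by
  apply LinearMap.ext; intro f
  funext p
  exact qeaRho_pow_eval_zero i ℓ f p (p.1 i).isLt

include hℓ

lemma qeaRho_qcomm (hq : q ^ ℓ = 1) (i j : Fin m) (hij : i < j) :
    (qeaRho k q m ℓ i) * (qeaRho k q m ℓ j) = q • ((qeaRho k q m ℓ j) * (qeaRho k q m ℓ i)) := by
  have hij' : i ≠ j := ne_of_lt hij
  have hji : ¬ (j < i) := asymm hij
  apply LinearMap.ext; intro f; funext p
  simp only [Module.End.mul_apply, LinearMap.smul_apply, Pi.smul_apply, smul_eq_mul,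
    qeaRho_apply, Function.update_of_ne hij', Function.update_of_ne hij'.symm,
    if_neg hji, hji, if_false, hij, if_true]
  have hA : Function.update (Function.update p.1 i (p.1 i - 1)) j (p.1 j - 1)
      = Function.update (Function.update p.1 j (p.1 j - 1)) i (p.1 i - 1) :=
    Function.update_comm hij' _ _ _
  have hB : (fun l => if l < j then (if l < i then p.2 l - 1 else p.2 l) - 1
        else if l < i then p.2 l - 1 else p.2 l)
      = (fun l => if l < i then (if l < j then p.2 l - 1 else p.2 l) - 1
        else if l < j then p.2 l - 1 else p.2 l) := by
    funext l
    by_cases h1 : l < i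
    · have h2 : l < j := h1.trans hij
      simp [h1, h2]
    · by_cases h2 : l < j <;> simp [h1, h2]
  rw [hA, hB]
  split_ifs <;> first | (rw [← q_pow_fin_sub_one hℓ hq (p.2 i)]; ring) | ring


lemma bigR_pow_l (hq : q ^ ℓ = 1) (hq' : ∀ s : ℕ, 0 < s → s < ℓ → q ^ s ≠ 1)
    (lam : Fin m → k) : (∑ i, lam i • qeaRho k q m ℓ i) ^ ℓ = 0 := by
  apply qbinomial_sum_nilpotent q hℓ hq hq'
  · intro i _
    rw [smul_pow, qeaRho_pow_l, smul_zero]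
  · intro i _ j _ hij
    rw [smul_mul_smul_comm, smul_mul_smul_comm, qeaRho_qcomm hℓ hq i j hij,
      smul_smul, smul_smul]
    congr 1
    ring

omit hℓ

section Filt
variable (i₀ : Fin m)

/-- Functions vanishing on indices whose `i₀`-degree is at least `t`. -/
def qeaFilt (t : ℕ) : Submodule k (QEASpace k m ℓ) where
  carrier := {f | ∀ p : QEAIdx m ℓ, t ≤ (p.1 i₀).val → f p = 0}
  add_mem' := fun hf hg p hp => by rw [Pi.add_apply, hf p hp, hg p hp, add_zero]
  zero_mem' := fun p hp => rfl
  smul_mem' := fun c f hf p hp => by rw [Pi.smul_apply, hf p hp, smul_zero]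

lemma mem_qeaFilt {t : ℕ} {f : QEASpace k m ℓ} :
    f ∈ qeaFilt (k := k) (ℓ := ℓ) i₀ t ↔ ∀ p : QEAIdx m ℓ, t ≤ (p.1 i₀).val → f p = 0 := Iff.rfl

lemma qeaFilt_mono {t t' : ℕ} (h : t ≤ t') : qeaFilt (k := k) (ℓ := ℓ) i₀ t ≤ qeaFilt (k := k) (ℓ := ℓ) i₀ t' :=
  fun f hf p hp => hf p (le_trans h hp)

lemma single_mem_qeaFilt (p₀ : QEAIdx m ℓ) :
    Pi.single p₀ (1:k) ∈ qeaFilt (k := k) (ℓ := ℓ) i₀ ((p₀.1 i₀).val + 1) := by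
  intro p hp
  rw [Pi.single_apply, if_neg]
  intro hc
  rw [hc] at hp
  omega

variable (lam : Fin m → k)

lemma bigR_apply (f : QEASpace k m ℓ) (p : QEAIdx m ℓ) :
    (∑ i, lam i • qeaRho k q m ℓ i) f p
      = ∑ i, lam i * (qeaRho k q m ℓ i f p) := by
  rw [LinearMap.sum_apply, Finset.sum_apply]
  exact Finset.sum_congr rfl fun i _ => rfl

lemma bigR_filt {t : ℕ} {f : QEASpace k m ℓ} (hf : f ∈ qeaFilt (k := k) (ℓ := ℓ) i₀ t) :
    (∑ i, lam i • qeaRho k q m ℓ i) f ∈ qeaFilt (k := k) (ℓ := ℓ) i₀ (t + 1) := by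
  intro p hp
  rw [bigR_apply]
  refine Finset.sum_eq_zero fun i _ => ?_
  rw [qeaRho_apply]
  split_ifs with hc
  · rw [hf _ ?_, mul_zero, mul_zero]
    show t ≤ ((Function.update p.1 i (p.1 i - 1)) i₀).val
    rcases eq_or_ne i i₀ with rfl | hne
    · rw [Function.update_self, fin_sub_one_val _ hc]
      omega
    · rw [Function.update_of_ne (Ne.symm hne)]
      omega
  · rw [mul_zero]

lemma bigR_pow_filt {t : ℕ} {f : QEASpace k m ℓ} (hf : f ∈ qeaFilt (k := k) (ℓ := ℓ) i₀ t) (s : ℕ) :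
    ((∑ i, lam i • qeaRho k q m ℓ i) ^ s) f ∈ qeaFilt (k := k) (ℓ := ℓ) i₀ (t + s) := by
  induction s with
  | zero => exact hf
  | succ s ih =>
    rw [pow_succ', Module.End.mul_apply]
    exact bigR_filt i₀ lam ih

lemma fin_add_one_val (x : Fin ℓ) (h : x.val + 1 < ℓ) : (x + 1).val = x.val + 1 := by
  have h1 : ((1 : Fin ℓ) : ℕ) = 1 := by
    rw [Fin.val_one']; exact Nat.mod_eq_of_lt (by omega)
  rw [Fin.add_def, h1]
  exact Nat.mod_eq_of_lt h

/-- Single-step leading-term lemma. -/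
lemma bigR_single_step (A B : Fin m → Fin ℓ) {s : ℕ} (hA : (A i₀).val = s) (hs : s + 1 < ℓ) :
    (∑ i, lam i • qeaRho k q m ℓ i) (Pi.single (A, B) (1:k))
      - (lam i₀ * q ^ ((B i₀).val)) •
          (Pi.single (Function.update A i₀ (A i₀ + 1),
            fun l => if l < i₀ then B l + 1 else B l) (1:k) : QEASpace k m ℓ)
      ∈ qeaFilt (k := k) (ℓ := ℓ) i₀ (s + 1) := by
  intro p hp
  rw [Pi.sub_apply, bigR_apply, Pi.smul_apply, smul_eq_mul]
  rw [Finset.sum_eq_single_of_mem i₀ (Finset.mem_univ i₀) ?side]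
  case side =>
    intro i _ hi
    rw [qeaRho_apply]
    split_ifs with hc
    · rw [Pi.single_apply, if_neg, mul_zero, mul_zero]
      intro hEq
      obtain ⟨h1, -⟩ := Prod.mk.inj hEq
      have h3 := congrFun h1 i₀
      rw [Function.update_of_ne (Ne.symm hi)] at h3
      have : (p.1 i₀).val = s := by rw [h3, hA]
      omega
    · rw [mul_zero]
  have hc1 : 1 ≤ (p.1 i₀).val := by omega
  rw [qeaRho_apply, if_pos hc1, Pi.single_apply, Pi.single_apply]
  have hiff : ((Function.update p.1 i₀ (p.1 i₀ - 1),
        fun j => if j < i₀ then p.2 j - 1 else p.2 j) = ((A, B) : QEAIdx m ℓ))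
      ↔ (p = ((Function.update A i₀ (A i₀ + 1),
        fun l => if l < i₀ then B l + 1 else B l) : QEAIdx m ℓ)) := by
    constructor
    · intro hEq
      obtain ⟨h1, h2⟩ := Prod.mk.inj hEq
      refine Prod.ext ?_ ?_
      · show p.1 = Function.update A i₀ (A i₀ + 1)
        funext l
        rcases eq_or_ne l i₀ with rfl | hl
        · rw [Function.update_self]
          have h3 := congrFun h1 l
          rw [Function.update_self] at h3
          rw [← h3, sub_add_cancel]
        · rw [Function.update_of_ne hl]
          have h3 := congrFun h1 l
          rwa [Function.update_of_ne hl] at h3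
      · show p.2 = fun l => if l < i₀ then B l + 1 else B l
        funext l
        have h3 := congrFun h2 l
        by_cases hl : l < i₀
        · rw [if_pos hl] at h3 ⊢
          rw [← h3, sub_add_cancel]
        · rw [if_neg hl] at h3 ⊢
          exact h3
    · intro h
      subst h
      refine Prod.ext ?_ ?_
      · show Function.update (Function.update A i₀ (A i₀ + 1)) i₀
            ((Function.update A i₀ (A i₀ + 1)) i₀ - 1) = A
        rw [Function.update_self, add_sub_cancel_right, Function.update_idem,
          Function.update_eq_self]
      · show (fun j => if j < i₀ then (if j < i₀ then B j + 1 else B j) - 1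
            else (if j < i₀ then B j + 1 else B j)) = B
        funext l
        by_cases hl : l < i₀ <;> simp [hl]
  rw [if_congr hiff rfl rfl]
  split_ifs with h
  · have hB : p.2 i₀ = B i₀ := by
      rw [h]
      exact if_neg (lt_irrefl i₀)
    rw [hB]
    ring
  · ring

/-- Multi-step leading-term lemma. -/
lemma bigR_leading (a b : Fin m → Fin ℓ) (ha : (a i₀).val = 0) :
    ∀ (s : ℕ) (hs : s < ℓ),
    ((∑ i, lam i • qeaRho k q m ℓ i) ^ s) (Pi.single (a, b) (1:k))
      - (lam i₀ ^ s * q ^ (s * (b i₀).val)) •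
        (Pi.single (Function.update a i₀ (⟨s, hs⟩ : Fin ℓ),
          fun l => if l < i₀ then b l + ((s : ℕ) : Fin ℓ) else b l) (1:k) : QEASpace k m ℓ)
      ∈ qeaFilt (k := k) (ℓ := ℓ) i₀ s := by
  intro s
  induction s with
  | zero =>
    intro hs
    have h1 : Function.update a i₀ (⟨0, hs⟩ : Fin ℓ) = a := by
      have h0 : (⟨0, hs⟩ : Fin ℓ) = a i₀ := Fin.ext (by rw [ha])
      rw [h0, Function.update_eq_self]
    have h2 : (fun l => if l < i₀ then b l + (((0:ℕ)) : Fin ℓ) else b l) = b := by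
      funext l; rw [Nat.cast_zero, add_zero, ite_self]
    rw [pow_zero, Module.End.one_apply, h1, h2, pow_zero, Nat.zero_mul, pow_zero, mul_one,
      one_smul, sub_self]
    exact Submodule.zero_mem _
  | succ s ih =>
    intro hs
    have hsl : s < ℓ := by omega
    have hIH := ih hsl
    set R := ∑ i, lam i • qeaRho k q m ℓ i with hRdef
    set A := Function.update a i₀ (⟨s, hsl⟩ : Fin ℓ) with hAdef
    set Bf := (fun l => if l < i₀ then b l + ((s : ℕ) : Fin ℓ) else b l) with hBfdef
    have hA : (A i₀).val = s := by rw [hAdef, Function.update_self]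
    have h2 := bigR_single_step (q := q) i₀ lam A Bf hA hs
    have hAi : A i₀ = (⟨s, hsl⟩ : Fin ℓ) := by rw [hAdef, Function.update_self]
    have e1 : Function.update A i₀ (A i₀ + 1) = Function.update a i₀ (⟨s+1, hs⟩ : Fin ℓ) := by
      rw [hAi, hAdef, Function.update_idem]
      have hv : (⟨s, hsl⟩ : Fin ℓ) + 1 = (⟨s+1, hs⟩ : Fin ℓ) :=
        Fin.ext (by rw [fin_add_one_val _ (by exact hs)])
      rw [hv]
    have e3 : Bf i₀ = b i₀ := by
      rw [hBfdef]
      exact if_neg (lt_irrefl i₀)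
    have e2 : (fun l => if l < i₀ then Bf l + 1 else Bf l)
        = (fun l => if l < i₀ then b l + ((s + 1 : ℕ) : Fin ℓ) else b l) := by
      funext l
      by_cases hl : l < i₀
      · rw [if_pos hl, if_pos hl, hBfdef]
        show (if l < i₀ then b l + ((s : ℕ) : Fin ℓ) else b l) + 1 = _
        rw [if_pos hl, Nat.cast_succ, add_assoc]
      · rw [if_neg hl, if_neg hl, hBfdef]
        show (if l < i₀ then b l + ((s : ℕ) : Fin ℓ) else b l) = b l
        exact if_neg hl
    rw [e1, e2, e3] at h2
    have h1 := bigR_filt (q := q) i₀ lam hIH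
    have hco : lam i₀ ^ (s+1) * q ^ ((s+1)*(b i₀).val)
        = lam i₀ ^ s * q ^ (s*(b i₀).val) * (lam i₀ * q ^ ((b i₀).val)) := by
      rw [Nat.succ_mul, pow_add, pow_succ]
      ring
    have key : (R ^ (s+1)) (Pi.single (a, b) (1:k))
        - (lam i₀ ^ (s+1) * q ^ ((s+1)*(b i₀).val)) •
          (Pi.single (Function.update a i₀ (⟨s+1, hs⟩ : Fin ℓ),
            fun l => if l < i₀ then b l + ((s + 1 : ℕ) : Fin ℓ) else b l) (1:k) : QEASpace k m ℓ)
        = R ((R ^ s) (Pi.single (a, b) (1:k)) - (lam i₀ ^ s * q ^ (s*(b i₀).val)) •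
            (Pi.single (A, Bf) (1:k) : QEASpace k m ℓ))
          + (lam i₀ ^ s * q ^ (s*(b i₀).val)) •
            (R (Pi.single (A, Bf) (1:k)) - (lam i₀ * q ^ ((b i₀).val)) •
              (Pi.single (Function.update a i₀ (⟨s+1, hs⟩ : Fin ℓ),
                fun l => if l < i₀ then b l + ((s + 1 : ℕ) : Fin ℓ) else b l) (1:k)
                : QEASpace k m ℓ)) := by
      rw [pow_succ', Module.End.mul_apply, map_sub, map_smul, hco, smul_sub, smul_smul]
      abel
    rw [key]
    exact Submodule.add_mem _ h1 (Submodule.smul_mem _ _ h2)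

/-- The triangular family: `u_p = ρ_λ^{p₁(i₀)} e_{(p₁[i₀:=0], p₂)}`. -/
def qeaU (q : k) (lam : Fin m → k) (p : QEAIdx m ℓ) : QEASpace k m ℓ :=
  ((∑ i, lam i • qeaRho k q m ℓ i) ^ (p.1 i₀).val)
    (Pi.single (Function.update p.1 i₀ (0 : Fin ℓ), p.2) (1:k))

lemma qeaU_def (p : QEAIdx m ℓ) : qeaU (ℓ := ℓ) (q := q) i₀ lam p
    = ((∑ i, lam i • qeaRho k q m ℓ i) ^ (p.1 i₀).val)
        (Pi.single (Function.update p.1 i₀ (0 : Fin ℓ), p.2) (1:k)) := rfl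

lemma qeaU_mem_filt (p : QEAIdx m ℓ) :
    qeaU (ℓ := ℓ) (q := q) i₀ lam p ∈ qeaFilt (k := k) (ℓ := ℓ) i₀ ((p.1 i₀).val + 1) := by
  rw [qeaU_def]
  have h0 : (Pi.single (Function.update p.1 i₀ (0 : Fin ℓ), p.2) (1:k) : QEASpace k m ℓ)
      ∈ qeaFilt (k := k) (ℓ := ℓ) i₀ 1 := by
    have := single_mem_qeaFilt (k := k) i₀ (Function.update p.1 i₀ (0 : Fin ℓ), p.2)
    rwa [show ((Function.update p.1 i₀ (0 : Fin ℓ), p.2).1 i₀).val = 0 from by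
      simp, zero_add] at this
  have h := bigR_pow_filt (q := q) i₀ lam h0 ((p.1 i₀).val)
  exact qeaFilt_mono i₀ (le_of_eq (Nat.add_comm 1 _)) h

lemma qeaU_leading (p : QEAIdx m ℓ) :
    qeaU (ℓ := ℓ) (q := q) i₀ lam p
      - (lam i₀ ^ (p.1 i₀).val * q ^ ((p.1 i₀).val * (p.2 i₀).val)) •
        (Pi.single (p.1,
          fun l => if l < i₀ then p.2 l + (((p.1 i₀).val : ℕ) : Fin ℓ) else p.2 l)
          (1:k) : QEASpace k m ℓ)
      ∈ qeaFilt (k := k) (ℓ := ℓ) i₀ ((p.1 i₀).val) := by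
  rw [qeaU_def]
  have h := bigR_leading (q := q) i₀ lam (Function.update p.1 i₀ (0 : Fin ℓ)) p.2
    (by simp) ((p.1 i₀).val) (p.1 i₀).isLt
  have e1 : Function.update (Function.update p.1 i₀ (0:Fin ℓ)) i₀
      (⟨(p.1 i₀).val, (p.1 i₀).isLt⟩ : Fin ℓ) = p.1 := by
    rw [Function.update_idem]
    have hv : (⟨(p.1 i₀).val, (p.1 i₀).isLt⟩ : Fin ℓ) = p.1 i₀ := Fin.ext rfl
    rw [hv, Function.update_eq_self]
  rw [e1] at h
  exact h

lemma qeaU_indep (hq : q ^ ℓ = 1) (hlam0 : lam i₀ ≠ 0) :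
    LinearIndependent k (qeaU (ℓ := ℓ) (q := q) i₀ lam) := by
  have hq0 : q ≠ 0 := by
    intro h
    rw [h, zero_pow (M₀ := k) (NeZero.ne ℓ)] at hq
    exact one_ne_zero hq.symm
  rw [Fintype.linearIndependent_iff]
  intro g hsum
  have main : ∀ t : ℕ, ∀ p : QEAIdx m ℓ, ℓ - t ≤ (p.1 i₀).val → g p = 0 := by
    intro t
    induction t with
    | zero =>
      intro p hp
      exact absurd hp (by have := (p.1 i₀).isLt; omega)
    | succ t ih =>
      intro p hp
      rcases Nat.lt_or_ge (p.1 i₀).val (ℓ - t) with hlt | hge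
      swap
      · exact ih p hge
      have hsl : (p.1 i₀).val < ℓ := (p.1 i₀).isLt
      set P : QEAIdx m ℓ := (p.1,
        fun l => if l < i₀ then p.2 l + (((p.1 i₀).val : ℕ) : Fin ℓ) else p.2 l) with hPdef
      have hPv : (P.1 i₀).val = (p.1 i₀).val := by rw [hPdef]
      have hz := congrFun hsum P
      rw [Finset.sum_apply, Pi.zero_apply] at hz
      rw [Finset.sum_eq_single_of_mem p (Finset.mem_univ p) ?side] at hz
      case side =>
        intro r _ hrp
        rw [Pi.smul_apply, smul_eq_mul]
        rcases lt_trichotomy ((r.1 i₀).val) ((p.1 i₀).val) with h1 | h2 | h3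
        · rw [qeaU_mem_filt (q := q) i₀ lam r P (by omega), mul_zero]
        · have hw := qeaU_leading (q := q) i₀ lam r P (by omega)
          rw [Pi.sub_apply, Pi.smul_apply, smul_eq_mul, sub_eq_zero] at hw
          rw [hw, Pi.single_apply, if_neg, mul_zero, mul_zero]
          intro hc
          apply hrp
          rw [hPdef] at hc
          obtain ⟨h1', h2'⟩ := Prod.mk.inj hc
          refine Prod.ext h1'.symm ?_
          funext l
          have h3' := congrFun h2' l
          by_cases hl' : l < i₀
          · rw [if_pos hl', if_pos hl', h2] at h3'
            exact (add_right_cancel h3').symm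
          · rw [if_neg hl', if_neg hl'] at h3'
            exact h3'.symm
        · rw [ih r (by omega), zero_mul]
      rw [Pi.smul_apply, smul_eq_mul] at hz
      have hw := qeaU_leading (q := q) i₀ lam p P (by omega)
      rw [Pi.sub_apply, Pi.smul_apply, smul_eq_mul, sub_eq_zero] at hw
      rw [hw, Pi.single_apply, if_pos hPdef, mul_one] at hz
      have hc0 : lam i₀ ^ ((p.1 i₀).val) * q ^ ((p.1 i₀).val * (p.2 i₀).val) ≠ 0 :=
        mul_ne_zero (pow_ne_zero _ hlam0) (pow_ne_zero _ hq0)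
      exact (mul_eq_zero.mp hz).resolve_right hc0
  intro p
  exact main ℓ p (by omega)

lemma bigR_qeaU_lt (p : QEAIdx m ℓ) (h : (p.1 i₀).val + 1 < ℓ) :
    (∑ i, lam i • qeaRho k q m ℓ i) (qeaU (ℓ := ℓ) (q := q) i₀ lam p)
      = qeaU (ℓ := ℓ) (q := q) i₀ lam (Function.update p.1 i₀ (p.1 i₀ + 1), p.2) := by
  simp only [qeaU_def, Function.update_self, Function.update_idem]
  rw [← Module.End.mul_apply, ← pow_succ']
  congr 2
  exact (fin_add_one_val _ h).symm

lemma bigR_qeaU_top (hℓ' : 2 ≤ ℓ) (hq : q ^ ℓ = 1)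
    (hq' : ∀ s : ℕ, 0 < s → s < ℓ → q ^ s ≠ 1) (p : QEAIdx m ℓ)
    (h : (p.1 i₀).val + 1 = ℓ) :
    (∑ i, lam i • qeaRho k q m ℓ i) (qeaU (ℓ := ℓ) (q := q) i₀ lam p) = 0 := by
  rw [qeaU_def, ← Module.End.mul_apply, ← pow_succ', h, bigR_pow_l hℓ' hq hq' lam,
    LinearMap.zero_apply]

lemma bigR_pow_qeaU_lt :
    ∀ (j : ℕ) (p : QEAIdx m ℓ) (h : (p.1 i₀).val + j < ℓ),
    ((∑ i, lam i • qeaRho k q m ℓ i) ^ j) (qeaU (ℓ := ℓ) (q := q) i₀ lam p)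
      = qeaU (ℓ := ℓ) (q := q) i₀ lam
          (Function.update p.1 i₀ (⟨(p.1 i₀).val + j, h⟩ : Fin ℓ), p.2) := by
  intro j
  induction j with
  | zero =>
    intro p h
    have e : (Function.update p.1 i₀ (⟨(p.1 i₀).val + 0, h⟩ : Fin ℓ), p.2) = p := by
      rw [show (⟨(p.1 i₀).val + 0, h⟩ : Fin ℓ) = p.1 i₀ from Fin.ext (Nat.add_zero _),
        Function.update_eq_self]
    rw [pow_zero, Module.End.one_apply, e]
  | succ j ih =>
    intro p h
    have hval : ((Function.update p.1 i₀ (p.1 i₀ + 1) : Fin m → Fin ℓ) i₀).val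
        = (p.1 i₀).val + 1 := by
      rw [Function.update_self, fin_add_one_val _ (by omega)]
    rw [pow_succ, Module.End.mul_apply, bigR_qeaU_lt i₀ lam p (by omega)]
    have h' : ((Function.update p.1 i₀ (p.1 i₀ + 1) : Fin m → Fin ℓ) i₀).val + j < ℓ := by
      omega
    rw [ih (Function.update p.1 i₀ (p.1 i₀ + 1), p.2) h']
    refine congrArg _ (Prod.ext ?_ rfl)
    show Function.update (Function.update p.1 i₀ (p.1 i₀ + 1)) i₀
        (⟨((Function.update p.1 i₀ (p.1 i₀ + 1) : Fin m → Fin ℓ) i₀).val + j, h'⟩ : Fin ℓ)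
        = Function.update p.1 i₀ (⟨(p.1 i₀).val + (j+1), h⟩ : Fin ℓ)
    rw [Function.update_idem]
    refine congrArg _ (Fin.ext ?_)
    show ((Function.update p.1 i₀ (p.1 i₀ + 1) : Fin m → Fin ℓ) i₀).val + j
        = (p.1 i₀).val + (j+1)
    omega

lemma bigR_pow_qeaU_top (hℓ' : 2 ≤ ℓ) (hq : q ^ ℓ = 1)
    (hq' : ∀ s : ℕ, 0 < s → s < ℓ → q ^ s ≠ 1) :
    ∀ (j : ℕ) (p : QEAIdx m ℓ), ℓ ≤ (p.1 i₀).val + j →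
    ((∑ i, lam i • qeaRho k q m ℓ i) ^ j) (qeaU (ℓ := ℓ) (q := q) i₀ lam p) = 0 := by
  intro j
  induction j with
  | zero =>
    intro p h
    exact absurd h (by have := (p.1 i₀).isLt; omega)
  | succ j ih =>
    intro p h
    rw [pow_succ, Module.End.mul_apply]
    rcases Nat.lt_or_ge ((p.1 i₀).val + 1) ℓ with hc | hc
    · have hval : ((Function.update p.1 i₀ (p.1 i₀ + 1) : Fin m → Fin ℓ) i₀).val
          = (p.1 i₀).val + 1 := by
        rw [Function.update_self, fin_add_one_val _ hc]
      rw [bigR_qeaU_lt i₀ lam p hc]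
      exact ih (Function.update p.1 i₀ (p.1 i₀ + 1), p.2)
        (by show ℓ ≤ ((Function.update p.1 i₀ (p.1 i₀ + 1) : Fin m → Fin ℓ) i₀).val + j; omega)
    · have hc' : (p.1 i₀).val + 1 = ℓ := by have := (p.1 i₀).isLt; omega
      rw [bigR_qeaU_top i₀ lam hℓ' hq hq' p hc', map_zero]

lemma rank_bigR_pow (hℓ' : 2 ≤ ℓ) (hq : q ^ ℓ = 1)
    (hq' : ∀ s : ℕ, 0 < s → s < ℓ → q ^ s ≠ 1) (hlam0 : lam i₀ ≠ 0) (j : ℕ) :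
    Module.finrank k (LinearMap.range ((∑ i, lam i • qeaRho k q m ℓ i) ^ j))
      = Fintype.card {p : QEAIdx m ℓ // j ≤ (p.1 i₀).val} := by
  have hind := qeaU_indep i₀ lam hq hlam0
  have hcard : Fintype.card (QEAIdx m ℓ) = Module.finrank k (QEASpace k m ℓ) := by
    rw [Module.finrank_pi]
  let bas := basisOfLinearIndependentOfCardEqFinrank hind hcard
  have hbas : ⇑bas = qeaU (ℓ := ℓ) (q := q) i₀ lam :=
    coe_basisOfLinearIndependentOfCardEqFinrank hind hcard
  have hbasis : Submodule.span k (Set.range (qeaU (ℓ := ℓ) (q := q) i₀ lam)) = ⊤ := by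
    rw [← hbas]
    exact Module.Basis.span_eq bas
  have hrange : LinearMap.range ((∑ i, lam i • qeaRho k q m ℓ i) ^ j)
      = Submodule.span k (qeaU (ℓ := ℓ) (q := q) i₀ lam ''
          {p : QEAIdx m ℓ | j ≤ (p.1 i₀).val}) := by
    apply le_antisymm
    · rw [LinearMap.range_eq_map, ← hbasis, Submodule.map_span]
      refine Submodule.span_le.mpr ?_
      rintro y ⟨x, ⟨p, rfl⟩, rfl⟩
      rcases Nat.lt_or_ge ((p.1 i₀).val + j) ℓ with hc | hc
      · rw [bigR_pow_qeaU_lt i₀ lam j p hc]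
        apply Submodule.subset_span
        refine ⟨(Function.update p.1 i₀ (⟨(p.1 i₀).val + j, hc⟩ : Fin ℓ), p.2), ?_, rfl⟩
        show j ≤ ((Function.update p.1 i₀ (⟨(p.1 i₀).val + j, hc⟩ : Fin ℓ)) i₀).val
        rw [Function.update_self]
        exact Nat.le_add_left j _
      · rw [bigR_pow_qeaU_top i₀ lam hℓ' hq hq' j p hc]
        exact Submodule.zero_mem _
    · refine Submodule.span_le.mpr ?_
      rintro y ⟨p, hp, rfl⟩
      have hp' : j ≤ (p.1 i₀).val := hp
      have hsl : (p.1 i₀).val < ℓ := (p.1 i₀).isLt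
      refine ⟨qeaU (ℓ := ℓ) (q := q) i₀ lam
        (Function.update p.1 i₀ (⟨(p.1 i₀).val - j, by omega⟩ : Fin ℓ), p.2), ?_⟩
      have hval : ((Function.update p.1 i₀ (⟨(p.1 i₀).val - j, by omega⟩ : Fin ℓ)
          : Fin m → Fin ℓ) i₀).val = (p.1 i₀).val - j := by
        rw [Function.update_self]
      rw [bigR_pow_qeaU_lt i₀ lam j _ (by rw [hval]; omega)]
      refine congrArg _ (Prod.ext ?_ rfl)
      show Function.update (Function.update p.1 i₀ (⟨(p.1 i₀).val - j, by omega⟩ : Fin ℓ)) i₀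
          (⟨((Function.update p.1 i₀ (⟨(p.1 i₀).val - j, by omega⟩ : Fin ℓ)
            : Fin m → Fin ℓ) i₀).val + j, by rw [hval]; omega⟩ : Fin ℓ) = p.1
      rw [Function.update_idem]
      have : (⟨((Function.update p.1 i₀ (⟨(p.1 i₀).val - j, by omega⟩ : Fin ℓ)
          : Fin m → Fin ℓ) i₀).val + j, by omega⟩ : Fin ℓ) = p.1 i₀ := by
        refine Fin.ext ?_
        show ((Function.update p.1 i₀ (⟨(p.1 i₀).val - j, by omega⟩ : Fin ℓ)
          : Fin m → Fin ℓ) i₀).val + j = (p.1 i₀).val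
        rw [hval]
        omega
      rw [this, Function.update_eq_self]
  rw [hrange, Set.image_eq_range]
  exact finrank_span_eq_card (hind.comp Subtype.val Subtype.val_injective)

end Filt
end Ops

section Count

def prodSubtypeFstEquiv {α β : Type*} (P : α → Prop) : {p : α × β // P p.1} ≃ {a : α // P a} × β where
  toFun x := (⟨x.1.1, x.2⟩, x.1.2)
  invFun y := ⟨(y.1.1, y.2), y.1.2⟩
  left_inv x := rfl
  right_inv y := rfl

def finGeEquiv {ℓ : ℕ} (j : ℕ) : {y : Fin ℓ // j ≤ y.val} ≃ Fin (ℓ - j) where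
  toFun y := ⟨y.1.val - j, by have := y.1.isLt; have := y.2; omega⟩
  invFun z := ⟨⟨z.val + j, by have := z.isLt; omega⟩, Nat.le_add_left j _⟩
  left_inv y := by
    apply Subtype.ext; apply Fin.ext
    show y.1.val - j + j = y.1.val
    have := y.2; omega
  right_inv z := by
    apply Fin.ext
    show z.val + j - j = z.val
    omega

lemma card_ge {ℓ m : ℕ} (i₀ : Fin m) (j : ℕ) (hm : 0 < m) :
    Fintype.card {p : QEAIdx m ℓ // j ≤ (p.1 i₀).val} = (ℓ - j) * ℓ ^ (2*m - 1) := by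
  rw [Fintype.card_congr (prodSubtypeFstEquiv (fun a : Fin m → Fin ℓ => j ≤ (a i₀).val))]
  rw [Fintype.card_prod]
  have e2 : {a : Fin m → Fin ℓ // j ≤ (a i₀).val}
      ≃ {x : Fin ℓ × ({i : Fin m // i ≠ i₀} → Fin ℓ) // j ≤ x.1.val} :=
    (Equiv.piSplitAt i₀ (fun _ => Fin ℓ)).subtypeEquiv (fun a => Iff.rfl)
  rw [Fintype.card_congr e2,
    Fintype.card_congr (prodSubtypeFstEquiv (fun y : Fin ℓ => j ≤ y.val)),
    Fintype.card_prod, Fintype.card_congr (finGeEquiv j), Fintype.card_fin,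
    Fintype.card_fun, Fintype.card_fun, Fintype.card_fin, Fintype.card_subtype_compl,
    Fintype.card_subtype_eq, Fintype.card_fin]
  rw [mul_assoc, ← pow_add, show (m - 1) + m = 2*m - 1 by omega]

end Count


/-- **Lemma 2.4(iii).**  For every nonzero `λ ∈ k^m`, with `ρ_λ = λ_1 ρ_1 + ⋯ + λ_m ρ_m`
(right multiplication by `τ_λ(t)` on `A`), the images of `ρ_λ^{ℓ−1}` and of `ρ_λ` — the left
ideals `V(λ) = A·τ_λ(t)^{ℓ−1}` and `V′(λ) = A·τ_λ(t)` — have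
`dim_k V(λ) = ℓ^{2m−1}` and `dim_k V′(λ) = (ℓ−1)·ℓ^{2m−1}`. -/
theorem statement4 {k : Type*} [Field k] {ℓ : ℕ} (hℓ : 2 ≤ ℓ) [NeZero ℓ] {q : k}
    (hq : q ^ ℓ = 1) (hq' : ∀ s : ℕ, 0 < s → s < ℓ → q ^ s ≠ 1)
    {m : ℕ} (hm : 0 < m) (lam : Fin m → k) (hlam : lam ≠ 0) :
    Module.finrank k
        (LinearMap.range ((∑ i, lam i • qeaRho k q m ℓ i) ^ (ℓ - 1))) = ℓ ^ (2 * m - 1) ∧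
    Module.finrank k
        (LinearMap.range (∑ i, lam i • qeaRho k q m ℓ i)) = (ℓ - 1) * ℓ ^ (2 * m - 1) := by
  obtain ⟨i₀, hlam0⟩ : ∃ i, lam i ≠ 0 := by
    by_contra hc
    push_neg at hc
    exact hlam (funext hc)
  constructor
  · rw [rank_bigR_pow i₀ lam hℓ hq hq' hlam0 (ℓ-1), card_ge i₀ (ℓ-1) hm,
      show ℓ - (ℓ-1) = 1 by omega, one_mul]
  · rw [← pow_one (∑ i, lam i • qeaRho k q m ℓ i),
      rank_bigR_pow i₀ lam hℓ hq hq' hlam0 1, card_ge i₀ 1 hm]
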